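/- Let Y be a non-zero Banach space and S ⊆ Y a universal differentiability set. Then the Hausdorff dimension of S is at least 1. -/

import Mathlib

open Metric Set MeasureTheory ENNReal Filter


lemma exists_open_small {A : Set ℝ} (hA : volume A = 0) {r : ℝ≥0∞} (hr : 0 < r) :
    ∃ U, IsOpen U ∧ A ⊆ U ∧ volume U ≤ r := by
  obtain ⟨U, hU, hop, hvol⟩ := A.exists_isOpen_lt_of_lt (μ := volume) r (hA ▸ hr)
  exact ⟨U, hop, hU, hvol.le⟩

lemma tailsum (c : ℝ≥0∞) (N : ℕ) (f : ℕ → ℝ≥0∞)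
    (hf : ∀ n, f n ≤ if n < N then 0 else c * (2⁻¹ : ℝ≥0∞) ^ n) :
    (∑' n, f n) ≤ 2 * c * (2⁻¹ : ℝ≥0∞) ^ N := by
  set g : ℕ → ℝ≥0∞ := fun n => if n < N then 0 else c * (2⁻¹ : ℝ≥0∞) ^ n with hg
  have h1 : (∑' n, f n) ≤ ∑' n, g n := ENNReal.tsum_le_tsum hf
  have hinj : Function.Injective (fun n : ℕ => n + N) := fun a b h => by simpa using h
  have h2 : (∑' n, g (n + N)) = ∑' n, g n := by
    apply hinj.tsum_eq
    intro n hn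
    simp only [Function.mem_support, hg] at hn
    rcases le_or_gt N n with h | h
    · exact ⟨n - N, by simpa using Nat.sub_add_cancel h⟩
    · simp [h] at hn
  have h3 : (∑' n, g (n + N)) ≤ 2 * c * (2⁻¹ : ℝ≥0∞) ^ N := by
    have : ∀ n, g (n + N) = (c * (2⁻¹:ℝ≥0∞) ^ N) * (2⁻¹:ℝ≥0∞) ^ n := by
      intro n; simp only [hg, if_neg (by omega : ¬ n + N < N), pow_add]; ring
    rw [tsum_congr this, ENNReal.tsum_mul_left, ENNReal.tsum_geometric]
    have h4 : (1 - 2⁻¹ : ℝ≥0∞)⁻¹ = 2 := by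
      rw [ENNReal.one_sub_inv_two]; simp
    rw [h4]; ring_nf; exact le_refl _
  rw [← h2] at h1; exact h1.trans h3

lemma ofReal_half_pow (n : ℕ) : ENNReal.ofReal ((2⁻¹:ℝ)^n) = (2⁻¹:ℝ≥0∞)^n := by
  rw [ENNReal.ofReal_pow (by norm_num)]
  congr 1
  rw [ENNReal.ofReal_inv_of_pos (by norm_num)]
  norm_num

-- the inductive step
lemma zstep {A G : Set ℝ} (hA : volume A = 0) (hG : IsOpen G) (hGc : Gᶜ.Nonempty)
    (hAG : A ⊆ G) {ε : ℝ≥0∞} (hε : 0 < ε) :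
    ∃ G' : Set ℝ, IsOpen G' ∧ A ⊆ G' ∧ G' ⊆ G ∧ volume G' ≤ ε ∧
      ∀ u : ℝ, 0 < u → u ≤ 2⁻¹ →
        volume (G' ∩ {y | infDist y Gᶜ < u}) ≤ ENNReal.ofReal (u / 24) := by
  set d : ℝ → ℝ := fun y => infDist y Gᶜ with hd
  -- choose W n ⊇ B n
  have hWex : ∀ n : ℕ, ∃ W, IsOpen W ∧
      (A ∩ {y | (2⁻¹:ℝ)^(n+1) ≤ d y ∧ d y < (2⁻¹:ℝ)^n}) ⊆ W ∧
      volume W ≤ min (ENNReal.ofReal ((2⁻¹:ℝ)^n / 400)) (ε * (2⁻¹:ℝ≥0∞)^n / 4) := by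
    intro n
    apply exists_open_small (measure_mono_null inter_subset_left hA)
    apply lt_min
    · rw [ENNReal.ofReal_pos]; positivity
    · apply ENNReal.div_pos
      · exact (ENNReal.mul_pos hε.ne' (by norm_num : ((2⁻¹:ℝ≥0∞))^n ≠ 0)).ne'
      · norm_num
  choose W hWopen hWsub hWvol using hWex
  obtain ⟨Wt, hWtopen, hWtsub, hWtvol⟩ :
      ∃ W, IsOpen W ∧ (A ∩ {y | 1 ≤ d y}) ⊆ W ∧ volume W ≤ ε / 4 := by
    apply exists_open_small (measure_mono_null inter_subset_left hA)
    exact ENNReal.div_pos hε.ne' (by norm_num)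
  set V : ℕ → Set ℝ := fun n => W n ∩ {y | (2⁻¹:ℝ)^(n+2) < d y} with hV
  set Vt : Set ℝ := Wt ∩ {y | (2⁻¹:ℝ) < d y} with hVt
  have hdopen : ∀ c : ℝ, IsOpen {y : ℝ | c < d y} := fun c =>
    isOpen_lt continuous_const (continuous_infDist_pt _)
  have hVopen : ∀ n, IsOpen (V n) := fun n => (hWopen n).inter (hdopen _)
  have hVtopen : IsOpen Vt := hWtopen.inter (hdopen _)
  refine ⟨Vt ∪ ⋃ n, V n, hVtopen.union (isOpen_iUnion hVopen), ?_, ?_, ?_, ?_⟩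
  · -- A ⊆ G'
    intro y hy
    have hy0 : 0 < d y := by
      rw [hd]
      exact (IsClosed.notMem_iff_infDist_pos hG.isClosed_compl hGc).mp
        (by simp [hAG hy])
    rcases le_or_gt 1 (d y) with h1 | h1
    · exact Or.inl ⟨hWtsub ⟨hy, h1⟩, by simp [hVt]; linarith⟩
    · -- find n with 2⁻¹^(n+1) ≤ d y < 2⁻¹^n
      have hex : ∃ n : ℕ, (2⁻¹:ℝ)^(n+1) ≤ d y := by
        obtain ⟨n, hn⟩ := exists_pow_lt_of_lt_one hy0 (by norm_num : (2⁻¹:ℝ) < 1)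
        refine ⟨n, le_trans (pow_le_pow_of_le_one (by norm_num) (by norm_num) (Nat.le_succ n)) hn.le⟩
      set N := Nat.find hex with hN
      have h2 : (2⁻¹:ℝ)^(N+1) ≤ d y := Nat.find_spec hex
      have h3 : d y < (2⁻¹:ℝ)^N := by
        rcases Nat.eq_zero_or_pos N with h | h
        · simpa [h] using h1
        · have := Nat.find_min hex (m := N - 1) (by omega)
          push_neg at this
          calc d y < (2⁻¹:ℝ)^(N-1+1) := this
            _ = (2⁻¹:ℝ)^N := by congr 1; omega
      refine Or.inr (mem_iUnion.mpr ⟨N, hWsub N ⟨hy, h2, h3⟩, ?_⟩)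
      simp only [mem_setOf_eq]
      exact lt_of_lt_of_le
        (pow_lt_pow_right_of_lt_one₀ (by norm_num) (by norm_num) (by omega)) h2
  · -- G' ⊆ G
    intro y hy
    have hy0 : 0 < d y := by
      rcases hy with h | h
      · exact lt_trans (by norm_num) h.2
      · obtain ⟨n, hn⟩ := mem_iUnion.mp h
        exact lt_of_le_of_lt (by positivity) hn.2
    by_contra hyG
    have h0 : infDist y Gᶜ = 0 := infDist_zero_of_mem hyG
    simp only [hd] at hy0
    linarith
  · -- volume ≤ ε
    calc volume (Vt ∪ ⋃ n, V n) ≤ volume Vt + volume (⋃ n, V n) := measure_union_le _ _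
      _ ≤ ε / 4 + ∑' n, volume (V n) :=
          add_le_add ((measure_mono inter_subset_left).trans hWtvol)
            (measure_iUnion_le _)
      _ ≤ ε / 4 + ∑' n : ℕ, ε * (2⁻¹:ℝ≥0∞)^n / 4 := by
          refine add_le_add_right (ENNReal.tsum_le_tsum fun n => ?_) _
          exact (measure_mono inter_subset_left).trans ((hWvol n).trans (min_le_right _ _))
      _ ≤ ε := by
          have hts : (∑' n : ℕ, ε * (2⁻¹:ℝ≥0∞)^n / 4) = ε/2 := by
            simp_rw [div_eq_mul_inv, mul_assoc, mul_comm ((2⁻¹:ℝ≥0∞)^_), ← mul_assoc]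
            rw [ENNReal.tsum_mul_left, ENNReal.tsum_geometric, ENNReal.one_sub_inv_two]
            rw [show ((2:ℝ≥0∞)⁻¹)⁻¹ = 2 by simp]
            rw [mul_assoc, show (4:ℝ≥0∞)⁻¹*2 = 2⁻¹ by
              rw [show (4:ℝ≥0∞) = 2*2 by norm_num, ENNReal.mul_inv (by norm_num) (by norm_num),
                mul_assoc, ENNReal.inv_mul_cancel (by norm_num) (by norm_num), mul_one]]
          rw [hts]
          calc ε/4 + ε/2 ≤ ε/2 + ε/2 := by gcongr; norm_num
            _ = ε := ENNReal.add_halves ε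
  · -- the density condition
    intro u hu hu2
    have hVtempty : Vt ∩ {y | d y < u} = ∅ := by
      ext y; simp only [hVt, mem_inter_iff, mem_setOf_eq, mem_empty_iff_false, iff_false]
      rintro ⟨⟨-, h1⟩, h2⟩
      linarith
    have hsub : (Vt ∪ ⋃ n, V n) ∩ {y | d y < u} ⊆ ⋃ n, (V n ∩ {y | d y < u}) := by
      rintro y ⟨h1 | h1, h2⟩
      · exfalso
        have hmem : y ∈ Vt ∩ {y | d y < u} := ⟨h1, h2⟩
        rw [hVtempty] at hmem
        exact hmem
      · obtain ⟨n, hn⟩ := mem_iUnion.mp h1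
        exact mem_iUnion.mpr ⟨n, hn, h2⟩
    have hexN : ∃ n : ℕ, (2⁻¹:ℝ)^(n+2) < u := by
      obtain ⟨n, hn⟩ := exists_pow_lt_of_lt_one hu (by norm_num : (2⁻¹:ℝ) < 1)
      exact ⟨n, lt_of_le_of_lt (pow_le_pow_of_le_one (by norm_num) (by norm_num) (by omega)) hn⟩
    set N := Nat.find hexN with hNdef
    have hNspec : (2⁻¹:ℝ)^(N+2) < u := Nat.find_spec hexN
    have hterm : ∀ n, volume (V n ∩ {y | d y < u}) ≤
        if n < N then 0 else ENNReal.ofReal (1/400) * (2⁻¹:ℝ≥0∞)^n := by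
      intro n
      rcases lt_or_ge n N with h | h
      · rw [if_pos h]
        have : V n ∩ {y | d y < u} = ∅ := by
          ext y
          simp only [hV, mem_inter_iff, mem_setOf_eq, mem_empty_iff_false, iff_false]
          rintro ⟨⟨-, h1⟩, h2⟩
          have := Nat.find_min hexN h
          push_neg at this
          linarith
        simp [this]
      · rw [if_neg (by omega)]
        calc volume (V n ∩ {y | d y < u}) ≤ volume (W n) :=
              measure_mono (inter_subset_left.trans inter_subset_left)
          _ ≤ ENNReal.ofReal ((2⁻¹:ℝ)^n / 400) := (hWvol n).trans (min_le_left _ _)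
          _ = ENNReal.ofReal (1/400) * (2⁻¹:ℝ≥0∞)^n := by
              rw [← ofReal_half_pow, ← ENNReal.ofReal_mul (by norm_num)]
              congr 1; ring
    calc volume ((Vt ∪ ⋃ n, V n) ∩ {y | d y < u})
        ≤ volume (⋃ n, (V n ∩ {y | d y < u})) := measure_mono hsub
      _ ≤ ∑' n, volume (V n ∩ {y | d y < u}) := measure_iUnion_le _
      _ ≤ 2 * ENNReal.ofReal (1/400) * (2⁻¹:ℝ≥0∞)^N := tailsum _ N _ hterm
      _ ≤ ENNReal.ofReal (u / 24) := by
          rw [← ofReal_half_pow,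
            show (2:ℝ≥0∞) * ENNReal.ofReal (1/400) = ENNReal.ofReal (1/200) by
              rw [show (2:ℝ≥0∞) = ENNReal.ofReal 2 by simp,
                ← ENNReal.ofReal_mul (by norm_num)]; norm_num,
            ← ENNReal.ofReal_mul (by norm_num)]
          apply ENNReal.ofReal_le_ofReal
          have h5 : (2⁻¹:ℝ)^N < 4 * u := by
            have he : (2⁻¹:ℝ)^(N+2) = (2⁻¹:ℝ)^N / 4 := by ring
            nlinarith [hNspec]
          nlinarith

lemma exists_seq {A : Set ℝ} (hA : volume A = 0) :
    ∃ G : ℕ → Set ℝ, (∀ k, IsOpen (G k)) ∧ (∀ k, A ⊆ G k) ∧ (∀ k, (G k)ᶜ.Nonempty) ∧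
      (∀ k, volume (G k) ≤ (2⁻¹:ℝ≥0∞)^k) ∧ (∀ k, G (k+1) ⊆ G k) ∧
      (∀ k, ∀ u : ℝ, 0 < u → u ≤ 2⁻¹ →
        volume (G (k+1) ∩ {y | infDist y (G k)ᶜ < u}) ≤ ENNReal.ofReal (u/24)) := by
  obtain ⟨U0, hU0open, hU0sub, hU0vol⟩ := exists_open_small hA (r := 1) one_pos
  have hU0c : U0ᶜ.Nonempty := by
    rw [nonempty_compl]
    intro h
    rw [h] at hU0vol
    simp [Real.volume_univ] at hU0vol
  have step : ∀ (k : ℕ) (p : {s : Set ℝ // IsOpen s ∧ A ⊆ s ∧ sᶜ.Nonempty}),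
      ∃ q : {s : Set ℝ // IsOpen s ∧ A ⊆ s ∧ sᶜ.Nonempty},
        q.1 ⊆ p.1 ∧ volume q.1 ≤ (2⁻¹:ℝ≥0∞)^(k+1) ∧
        ∀ u : ℝ, 0 < u → u ≤ 2⁻¹ →
          volume (q.1 ∩ {y | infDist y p.1ᶜ < u}) ≤ ENNReal.ofReal (u/24) := by
    rintro k ⟨p, hpo, hpA, hpc⟩
    obtain ⟨G', h1, h2, h3, h4, h5⟩ := zstep hA hpo hpc hpA
      (ε := (2⁻¹:ℝ≥0∞)^(k+1)) (pos_iff_ne_zero.mpr (by norm_num))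
    exact ⟨⟨G', h1, h2, hpc.mono (compl_subset_compl.mpr h3)⟩, h3, h4, h5⟩
  choose F hFsub hFvol hFcond using step
  let g : ℕ → {s : Set ℝ // IsOpen s ∧ A ⊆ s ∧ sᶜ.Nonempty} :=
    fun k => Nat.rec ⟨U0, hU0open, hU0sub, hU0c⟩ (fun k p => F k p) k
  have hrec : ∀ k, g (k+1) = F k (g k) := fun k => rfl
  refine ⟨fun k => (g k).1, fun k => (g k).2.1, fun k => (g k).2.2.1,
    fun k => (g k).2.2.2, ?_, ?_, ?_⟩
  · intro k
    cases k with
    | zero => rw [pow_zero]; exact hU0vol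
    | succ k => simp only []; rw [hrec k]; exact hFvol k (g k)
  · intro k; simp only []; rw [hrec k]; exact hFsub k (g k)
  · intro k; simp only []; rw [hrec k]; exact hFcond k (g k)

lemma zahorski {A : Set ℝ} (hA : volume A = 0) :
    ∃ g : ℝ → ℝ, LipschitzWith 1 g ∧ ∀ x ∈ A, ¬ DifferentiableAt ℝ g x := by
  obtain ⟨G, hopen, hAsub, hcompl, hvol, hnest, hcond⟩ := exists_seq hA
  -- monotonicity of the chain
  have hmono : ∀ {j k : ℕ}, j ≤ k → G k ⊆ G j := by
    intro j k hjk
    induction hjk with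
    | refl => exact subset_rfl
    | step _ ih => exact fun y hy => ih (hnest _ hy)
  set E : Set ℝ := ⋃ i, (G (2*i) \ G (2*i+1)) with hE
  have hEmeas : MeasurableSet E :=
    MeasurableSet.iUnion fun i => ((hopen _).measurableSet.diff (hopen _).measurableSet)
  have hEsub : E ⊆ G 0 := by
    rintro y hy
    obtain ⟨i, hi⟩ := mem_iUnion.mp hy
    exact hmono (Nat.zero_le _) hi.1
  have hfin : ∀ s : Set ℝ, volume (E ∩ s) ≠ ∞ := by
    intro s
    refine ne_top_of_le_ne_top ?_ (measure_mono (inter_subset_left.trans hEsub))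
    exact ((hvol 0).trans_lt (by norm_num)).ne
  set g : ℝ → ℝ := fun x => (volume (E ∩ Iic x)).toReal with hg
  have hgdiff : ∀ {x y : ℝ}, x ≤ y → g y - g x = (volume (E ∩ Ioc x y)).toReal := by
    intro x y hxy
    have hsplit : E ∩ Iic y = (E ∩ Iic x) ∪ (E ∩ Ioc x y) := by
      rw [← inter_union_distrib_left, Iic_union_Ioc_eq_Iic hxy]
    have hdisj : Disjoint (E ∩ Iic x) (E ∩ Ioc x y) :=
      (Iic_disjoint_Ioc le_rfl).mono inter_subset_right inter_subset_right
    have hmeas2 : MeasurableSet (E ∩ Ioc x y) := hEmeas.inter measurableSet_Ioc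
    rw [hg]
    simp only []
    rw [hsplit, measure_union hdisj hmeas2, ENNReal.toReal_add (hfin _) (hfin _)]
    ring
  have hgmono : ∀ {x y : ℝ}, x ≤ y → g x ≤ g y := by
    intro x y hxy
    have := hgdiff hxy
    have h2 : (0:ℝ) ≤ (volume (E ∩ Ioc x y)).toReal := ENNReal.toReal_nonneg
    linarith
  have hlip : LipschitzWith 1 g := by
    apply LipschitzWith.of_dist_le_mul
    intro x y
    wlog hxy : y ≤ x generalizing x y
    · rw [dist_comm, dist_comm x y]; exact this _ _ (le_of_not_ge hxy)
    rw [Real.dist_eq, Real.dist_eq, abs_of_nonneg (by linarith [hgmono hxy]),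
      abs_of_nonneg (by linarith), hgdiff hxy, NNReal.coe_one, one_mul]
    have : volume (E ∩ Ioc y x) ≤ ENNReal.ofReal (x - y) := by
      rw [← Real.volume_Ioc]
      exact measure_mono inter_subset_right
    exact ENNReal.toReal_le_of_le_ofReal (by linarith) this
  refine ⟨g, hlip, ?_⟩
  intro x hx hdiff
  -- distances to complements
  set t : ℕ → ℝ := fun k => infDist x (G k)ᶜ with ht
  have ht0 : ∀ k, 0 < t k := fun k =>
    (IsClosed.notMem_iff_infDist_pos (hopen k).isClosed_compl (hcompl k)).mp
      (not_not_intro (hAsub k hx))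
  have hball : ∀ k y, dist y x < t k → y ∈ G k := by
    intro k y hy
    by_contra hyG
    have h1 : infDist x (G k)ᶜ ≤ dist x y := infDist_le_dist_of_mem hyG
    rw [dist_comm] at hy
    have h2 : infDist x (G k)ᶜ = t k := rfl
    linarith
  have htle : ∀ k, t k ≤ (2⁻¹:ℝ)^(k+1) := by
    intro k
    have hsub2 : Ioo (x - t k) (x + t k) ⊆ G k := by
      intro y hy
      apply hball k
      rw [Real.dist_eq, abs_lt]
      constructor <;> [linarith [hy.1]; linarith [hy.2]]
    have h1 : ENNReal.ofReal (2 * t k) ≤ ENNReal.ofReal ((2⁻¹:ℝ)^k) := by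
      rw [ofReal_half_pow]
      calc ENNReal.ofReal (2 * t k) = volume (Ioo (x - t k) (x + t k)) := by
            rw [Real.volume_Ioo]; congr 1; ring
        _ ≤ volume (G k) := measure_mono hsub2
        _ ≤ _ := hvol k
    have h2 : 2 * t k ≤ (2⁻¹:ℝ)^k :=
      (ENNReal.ofReal_le_ofReal_iff (by positivity)).mp h1
    calc t k = (2 * t k) * 2⁻¹ := by ring
      _ ≤ (2⁻¹:ℝ)^k * 2⁻¹ := by nlinarith
      _ = (2⁻¹:ℝ)^(k+1) := by ring
  -- LOW density estimate
  have hlowvol : ∀ j : ℕ, (volume (E ∩ Ioc x (x + t (2*j+1)/2))).toReal ≤ t (2*j+1)/2/6 := by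
    intro j
    set r : ℝ := t (2*j+1)/2 with hr
    have hrpos : 0 < r := by have := ht0 (2*j+1); positivity
    have hsub3 : E ∩ Ioc x (x + r) ⊆
        G (2*j+2) ∩ {y | infDist y (G (2*j+1))ᶜ < 4*r} := by
      rintro y ⟨hyE, hyI⟩
      have hdist : dist y x ≤ r := by
        rw [Real.dist_eq, abs_le]; constructor <;> [linarith [hyI.1]; linarith [hyI.2]]
      have hyG1 : y ∈ G (2*j+1) := hball _ y (lt_of_le_of_lt hdist (by linarith))
      obtain ⟨i, hyi⟩ := mem_iUnion.mp hyE
      have hij : j + 1 ≤ i := by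
        by_contra hij
        exact hyi.2 (hmono (by omega) hyG1)
      refine ⟨hmono (by omega) hyi.1, ?_⟩
      have he : infDist y (G (2*j+1))ᶜ ≤ infDist x (G (2*j+1))ᶜ + dist y x :=
        infDist_le_infDist_add_dist
      have hx2 : infDist x (G (2*j+1))ᶜ = t (2*j+1) := rfl
      simp only [mem_setOf_eq]
      linarith
    have hu : volume (G (2*j+2) ∩ {y | infDist y (G (2*j+1))ᶜ < 4*r}) ≤
        ENNReal.ofReal ((4*r)/24) := by
      apply hcond (2*j+1) (4*r) (by linarith)
      calc 4*r = 2 * t (2*j+1) := by rw [hr]; ring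
        _ ≤ 2 * (2⁻¹:ℝ)^(2*j+1+1) := by linarith [htle (2*j+1)]
        _ = (2⁻¹:ℝ)^(2*j+1) := by ring
        _ ≤ (2⁻¹:ℝ)^1 := pow_le_pow_of_le_one (by norm_num) (by norm_num) (by omega)
        _ = 2⁻¹ := pow_one _
    apply ENNReal.toReal_le_of_le_ofReal (by positivity)
    rw [show r/6 = (4*r)/24 by ring]
    exact le_trans (measure_mono hsub3) hu
  -- HIGH density estimate
  have hhighvol : ∀ j : ℕ, (volume (E ∩ Ioc x (x + t (2*j+2)/2))).toReal ≥
      5 * (t (2*j+2)/2) / 6 := by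
    intro j
    set r : ℝ := t (2*j+2)/2 with hr
    have hrpos : 0 < r := by have := ht0 (2*j+2); positivity
    have hsub4 : Ioc x (x+r) ∩ G (2*j+3) ⊆
        G (2*j+3) ∩ {y | infDist y (G (2*j+2))ᶜ < 4*r} := by
      rintro y ⟨hyI, hyG⟩
      have hdist : dist y x ≤ r := by
        rw [Real.dist_eq, abs_le]; constructor <;> [linarith [hyI.1]; linarith [hyI.2]]
      refine ⟨hyG, ?_⟩
      have he : infDist y (G (2*j+2))ᶜ ≤ infDist x (G (2*j+2))ᶜ + dist y x :=
        infDist_le_infDist_add_dist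
      have hx2 : infDist x (G (2*j+2))ᶜ = t (2*j+2) := rfl
      simp only [mem_setOf_eq]
      linarith
    have hu : volume (G (2*j+3) ∩ {y | infDist y (G (2*j+2))ᶜ < 4*r}) ≤
        ENNReal.ofReal ((4*r)/24) := by
      apply hcond (2*j+2) (4*r) (by linarith)
      calc 4*r = 2 * t (2*j+2) := by rw [hr]; ring
        _ ≤ 2 * (2⁻¹:ℝ)^(2*j+2+1) := by linarith [htle (2*j+2)]
        _ = (2⁻¹:ℝ)^(2*j+2) := by ring
        _ ≤ (2⁻¹:ℝ)^1 := pow_le_pow_of_le_one (by norm_num) (by norm_num) (by omega)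
        _ = 2⁻¹ := pow_one _
    have hsub5 : Ioc x (x+r) ⊆ G (2*j+2) := by
      intro y hy
      have hdist : dist y x ≤ r := by
        rw [Real.dist_eq, abs_le]; constructor <;> [linarith [hy.1]; linarith [hy.2]]
      exact hball _ y (lt_of_le_of_lt hdist (by linarith))
    have hsub6 : Ioc x (x+r) \ G (2*j+3) ⊆ E := by
      rintro y ⟨hyI, hyG⟩
      exact mem_iUnion.mpr ⟨j+1, ⟨hsub5 hyI, by
        convert hyG using 2 <;> first | omega | congr 1⟩⟩
    have hsplit : (Ioc x (x+r) : Set ℝ) ⊆ (E ∩ Ioc x (x+r)) ∪ (Ioc x (x+r) ∩ G (2*j+3)) := by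
      intro y hy
      by_cases hyG : y ∈ G (2*j+3)
      · exact Or.inr ⟨hy, hyG⟩
      · exact Or.inl ⟨hsub6 ⟨hy, hyG⟩, hy⟩
    have hm : ENNReal.ofReal r ≤ volume (E ∩ Ioc x (x+r)) + ENNReal.ofReal ((4*r)/24) := by
      calc ENNReal.ofReal r = volume (Ioc x (x+r)) := by rw [Real.volume_Ioc]; congr 1; ring
        _ ≤ volume ((E ∩ Ioc x (x+r)) ∪ (Ioc x (x+r) ∩ G (2*j+3))) := measure_mono hsplit
        _ ≤ volume (E ∩ Ioc x (x+r)) + volume (Ioc x (x+r) ∩ G (2*j+3)) := measure_union_le _ _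
        _ ≤ volume (E ∩ Ioc x (x+r)) + ENNReal.ofReal ((4*r)/24) :=
            add_le_add_right (le_trans (measure_mono hsub4) hu) _
    have hreal : r ≤ (volume (E ∩ Ioc x (x+r))).toReal + (4*r)/24 := by
      have h1 : (ENNReal.ofReal r).toReal ≤
          (volume (E ∩ Ioc x (x+r)) + ENNReal.ofReal ((4*r)/24)).toReal := by
        apply ENNReal.toReal_mono _ hm
        exact ENNReal.add_ne_top.mpr ⟨hfin _, ENNReal.ofReal_ne_top⟩
      rw [ENNReal.toReal_ofReal hrpos.le, ENNReal.toReal_add (hfin _) ENNReal.ofReal_ne_top,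
        ENNReal.toReal_ofReal (by positivity)] at h1
      exact h1
    linarith
  -- derivative and slopes
  have hder : HasDerivAt g (deriv g x) x := hdiff.hasDerivAt
  have hslope : Tendsto (slope g x) (nhdsWithin x {x}ᶜ) (nhds (deriv g x)) :=
    hasDerivAt_iff_tendsto_slope.mp hder
  have httend : Tendsto (fun k : ℕ => t k) atTop (nhds 0) := by
    apply squeeze_zero (fun k => (ht0 k).le) (fun k => (htle k))
    have h2 : Tendsto (fun k : ℕ => (2⁻¹:ℝ)^k) atTop (nhds 0) :=
      tendsto_pow_atTop_nhds_zero_of_lt_one (by norm_num) (by norm_num)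
    exact h2.comp (tendsto_add_atTop_nat 1)
  have hlowseq : Tendsto (fun j : ℕ => x + t (2*j+1)/2) atTop (nhdsWithin x {x}ᶜ) := by
    apply tendsto_nhdsWithin_of_tendsto_nhds_of_eventually_within
    · have h3 : Tendsto (fun j : ℕ => t (2*j+1)) atTop (nhds 0) :=
        httend.comp (tendsto_atTop_mono (fun j => by simp only [id_eq]; omega) tendsto_id)
      have h4 := ((h3.div_const 2).const_add x)
      simpa using h4
    · exact Eventually.of_forall fun j => by
        simp only [mem_compl_iff, mem_singleton_iff]
        have := ht0 (2*j+1); intro h; nlinarith [h]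
  have hhighseq : Tendsto (fun j : ℕ => x + t (2*j+2)/2) atTop (nhdsWithin x {x}ᶜ) := by
    apply tendsto_nhdsWithin_of_tendsto_nhds_of_eventually_within
    · have h3 : Tendsto (fun j : ℕ => t (2*j+2)) atTop (nhds 0) :=
        httend.comp (tendsto_atTop_mono (fun j => by simp only [id_eq]; omega) tendsto_id)
      have h4 := ((h3.div_const 2).const_add x)
      simpa using h4
    · exact Eventually.of_forall fun j => by
        simp only [mem_compl_iff, mem_singleton_iff]
        have := ht0 (2*j+2); intro h; nlinarith [h]
  have hslopelow : Tendsto (fun j : ℕ => slope g x (x + t (2*j+1)/2)) atTop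
      (nhds (deriv g x)) := hslope.comp hlowseq
  have hslopehigh : Tendsto (fun j : ℕ => slope g x (x + t (2*j+2)/2)) atTop
      (nhds (deriv g x)) := hslope.comp hhighseq
  have hL1 : deriv g x ≤ 1/6 := by
    apply le_of_tendsto hslopelow
    apply Eventually.of_forall
    intro j
    have hrpos : 0 < t (2*j+1)/2 := by have := ht0 (2*j+1); positivity
    rw [slope_def_field, show x + t (2*j+1)/2 - x = t (2*j+1)/2 by ring,
      hgdiff (by linarith : x ≤ x + t (2*j+1)/2), div_le_iff₀ hrpos]
    have := hlowvol j
    linarith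
  have hL2 : 5/6 ≤ deriv g x := by
    apply ge_of_tendsto hslopehigh
    apply Eventually.of_forall
    intro j
    have hrpos : 0 < t (2*j+2)/2 := by have := ht0 (2*j+2); positivity
    rw [slope_def_field, show x + t (2*j+2)/2 - x = t (2*j+2)/2 by ring,
      hgdiff (by linarith : x ≤ x + t (2*j+2)/2), le_div_iff₀ hrpos]
    have := hhighvol j
    linarith
  linarith


/-- Let `Y` be a non-zero Banach space and `S ⊆ Y` a universal
differentiability set. Then the Hausdorff dimension of `S` is at least `1`. -/
theorem statement2 (Y : Type*) [NormedAddCommGroup Y] [NormedSpace ℝ Y]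
    [CompleteSpace Y] [Nontrivial Y] (S : Set Y)
    (hS : ∀ f : Y → ℝ, (∃ K : NNReal, LipschitzWith K f) →
      ∃ y ∈ S, DifferentiableAt ℝ f y) :
    1 ≤ dimH S := by
  by_contra hdim
  push_neg at hdim
  -- a norm-one functional
  obtain ⟨x0, hx0⟩ := exists_ne (0 : Y)
  obtain ⟨φ, hφnorm, hφx⟩ := exists_dual_vector ℝ x0 (norm_ne_zero_iff.mpr hx0)
  set e : Y := ‖x0‖⁻¹ • x0 with he
  have hφe : φ e = 1 := by
    rw [he, _root_.map_smul, hφx, smul_eq_mul]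
    have hne : (‖x0‖ : ℝ) ≠ 0 := norm_ne_zero_iff.mpr hx0
    push_cast
    field_simp
    rfl
  -- φ '' S is null
  have hdimA : dimH (φ '' S) < 1 := lt_of_le_of_lt (by
    simpa using (φ.lipschitz.dimH_image_le S)) hdim
  have hnull : volume (φ '' S) = 0 := by
    rw [← MeasureTheory.hausdorffMeasure_real]
    exact hausdorffMeasure_of_dimH_lt (d := 1) (by simpa using hdimA)
  obtain ⟨g, hglip, hgnd⟩ := zahorski hnull
  -- apply hS to g ∘ φ
  obtain ⟨y, hyS, hydiff⟩ := hS (g ∘ φ) ⟨1 * ‖φ‖₊, hglip.comp φ.lipschitz⟩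
  -- transfer differentiability to g at φ y
  have hψ : DifferentiableAt ℝ (fun t : ℝ => y + (t - φ y) • e) (φ y) :=
    (differentiableAt_const _).add ((differentiableAt_id.sub_const _).smul_const e)
  have hcomp : (fun t : ℝ => (g ∘ φ) (y + (t - φ y) • e)) = g := by
    funext t
    simp only [Function.comp_apply, map_add, _root_.map_smul, smul_eq_mul, hφe]
    ring_nf
  have hgd : DifferentiableAt ℝ g (φ y) := by
    have h1 : DifferentiableAt ℝ ((g ∘ φ) ∘ fun t : ℝ => y + (t - φ y) • e) (φ y) := by
      apply DifferentiableAt.comp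
      · simpa using hydiff
      · exact hψ
    rwa [show (g ∘ φ) ∘ (fun t : ℝ => y + (t - φ y) • e) = g from hcomp] at h1
  exact hgnd (φ y) (mem_image_of_mem φ hyS) hgd
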